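/- Let T be a monoidal (commutative) monad on Set. If T is relevant, then T is n-relevant for every n ≥ 2. -/

import Mathlib

universe u

/-- `T` is relevant: ψ ∘ Δ = TΔ. -/
def Relevant (T : Type u → Type u) [Monad T] : Prop :=
  ∀ (A : Type u) (x : T A),
    @Prod.mk A A <$> x <*> x = (fun a => (a, a) : A → A × A) <$> x

/-- `T` is n-relevant: ψⁿ ∘ Δⁿ = TΔⁿ. -/
def NRelevant (T : Type u → Type u) [Monad T] (n : ℕ) : Prop :=
  ∀ (A : Type u) (x : T A),
    (List.replicate n x).traverse id = List.replicate n <$> x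

theorem aux_nRelevant
    (T : Type u → Type u) [Monad T] [LawfulMonad T]
    (hrel : Relevant T) (n : ℕ) :
    NRelevant T (n + 1) := by
  induction n with
  | zero =>
    intro A x
    simp [List.replicate, List.traverse]
  | succ n ih =>
    intro A x
    have h2 : (List.replicate (n + 1 + 1) x).traverse id
        = List.cons <$> x <*> (List.replicate (n + 1) x).traverse id := by
      simp [List.replicate_succ, List.traverse]
    rw [h2, ih A x]
    have key : (fun p : A × A => p.1 :: List.replicate (n + 1) p.2) <$>
        (@Prod.mk A A <$> x <*> x)
        = (fun p : A × A => p.1 :: List.replicate (n + 1) p.2) <$>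
          ((fun a => (a, a) : A → A × A) <$> x) := by rw [hrel A x]
    simp only [map_seq, Functor.map_map] at key
    simp only [seq_map_assoc, Functor.map_map]
    convert key using 2
    all_goals rfl

/-- relevance implies n-relevance for every n ≥ 2. -/
theorem relevant_implies_nRelevant
    (T : Type u → Type u) [Monad T] [LawfulMonad T] [CommApplicative T]
    (hrel : Relevant T) (n : ℕ) (hn : 2 ≤ n) :
    NRelevant T n := by
  obtain ⟨m, rfl⟩ : ∃ m, n = m + 1 := ⟨n - 1, by omega⟩
  exact aux_nRelevant T hrel m
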